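/- Let ε ∈ (0, 1/2), p_j with 1 − ε ≤ p_j ≤ 1, and 0 ≤ P_min < P_max be reals. Define P_au = (1 − (1−ε)/p_j)·P_max + ((1−ε)/p_j)·P_min if P_min/P_max ≤ 1 − p_j, and P_au = (ε/p_j)·(P_max − P_min) if P_min/P_max ≥ 1 − p_j. Then for every real P_a > 0, the covertness constraints P_max − P_min ≥ (p_j/ε)·P_a and (p_j/(1−ε) − 1)·P_max + P_min ≥ (p_j/(1−ε))·P_a hold if and only if P_a ≤ P_au; equivalently, P_au = min((1 − (1−ε)/p_j)·P_max + ((1−ε)/p_j)·P_min, (ε/p_j)·(P_max − P_min)). -/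

import Mathlib

theorem alice_max_power
    (ε pj Pmin Pmax : ℝ)
    (hε0 : 0 < ε) (hε1 : ε < 1/2)
    (hpjl : 1 - ε ≤ pj) (hpju : pj ≤ 1)
    (hPmin : 0 ≤ Pmin) (hlt : Pmin < Pmax)
    (Pau : ℝ)
    (hPau : Pau =
      if Pmin / Pmax ≤ 1 - pj then
        (1 - (1 - ε) / pj) * Pmax + (1 - ε) / pj * Pmin
      else ε / pj * (Pmax - Pmin)) :
    (∀ Pa : ℝ, 0 < Pa →
      ((pj / ε * Pa ≤ Pmax - Pmin ∧
          pj / (1 - ε) * Pa ≤ (pj / (1 - ε) - 1) * Pmax + Pmin) ↔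
        Pa ≤ Pau)) ∧
    Pau = min ((1 - (1 - ε) / pj) * Pmax + (1 - ε) / pj * Pmin)
              (ε / pj * (Pmax - Pmin)) := by
  have hpj : 0 < pj := by linarith
  have h1ε : 0 < 1 - ε := by linarith
  have hPmax : 0 < Pmax := lt_of_le_of_lt hPmin hlt
  have hdiff : ε / pj * (Pmax - Pmin)
      - ((1 - (1 - ε) / pj) * Pmax + (1 - ε) / pj * Pmin)
      = ((Pmax - Pmin) - pj * Pmax) / pj := by
    field_simp; ring
  have hmin : Pau = min ((1 - (1 - ε) / pj) * Pmax + (1 - ε) / pj * Pmin)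
      (ε / pj * (Pmax - Pmin)) := by
    rw [hPau]
    split_ifs with h
    · rw [div_le_iff₀ hPmax] at h
      symm; apply min_eq_left
      rw [← sub_nonneg, hdiff]
      apply div_nonneg _ hpj.le
      nlinarith
    · push_neg at h
      rw [lt_div_iff₀ hPmax] at h
      symm; apply min_eq_right
      rw [← sub_nonneg, ← neg_sub, hdiff, neg_nonneg]
      apply div_nonpos_of_nonpos_of_nonneg _ hpj.le
      nlinarith
  refine ⟨fun Pa _ => ?_, hmin⟩
  rw [hmin, le_min_iff]
  have e1 : pj / ε * Pa ≤ Pmax - Pmin ↔ Pa ≤ ε / pj * (Pmax - Pmin) := by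
    rw [div_mul_eq_mul_div, div_le_iff₀ hε0, div_mul_eq_mul_div, le_div_iff₀ hpj]
    constructor <;> intro <;> nlinarith
  have e2 : pj / (1 - ε) * Pa ≤ (pj / (1 - ε) - 1) * Pmax + Pmin ↔
      Pa ≤ (1 - (1 - ε) / pj) * Pmax + (1 - ε) / pj * Pmin := by
    rw [← mul_le_mul_iff_left₀ h1ε, ← mul_le_mul_iff_left₀ hpj (b := Pa)]
    have l1 : pj / (1 - ε) * Pa * (1 - ε) = pj * Pa := by field_simp
    have l2 : ((pj / (1 - ε) - 1) * Pmax + Pmin) * (1 - ε)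
        = pj * Pmax - (1 - ε) * Pmax + (1 - ε) * Pmin := by field_simp
    have l3 : ((1 - (1 - ε) / pj) * Pmax + (1 - ε) / pj * Pmin) * pj
        = pj * Pmax - (1 - ε) * Pmax + (1 - ε) * Pmin := by field_simp
    rw [l1, l2, l3]
    constructor <;> intro <;> nlinarith
  rw [e1, e2, and_comm]
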